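/- Let H be a real antisymmetric d×d matrix, ã a real symmetric positive semidefinite d×d matrix and C > 0 such that |H| ≤ C ã in the Loewner (positive semidefinite) order, where |H| = (−H²)^{1/2}. Then for all u, v ∈ ℝ^d, |uᵀHv| ≤ C (uᵀ ã u)^{1/2} (vᵀ ã v)^{1/2}. -/

import Mathlib

open Matrix
open scoped ComplexOrder
private lemma quad_form_aux (d : ℕ) (U : Matrix (Fin d) (Fin d) ℂ) (w : Fin d → ℂ)
    (x y : Fin d → ℂ) :
    star x ⬝ᵥ (U * diagonal w * Uᴴ) *ᵥ y
      = ∑ i, star ((Uᴴ *ᵥ x) i) * (w i * (Uᴴ *ᵥ y) i) := by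
  have h1 : (U * diagonal w * Uᴴ) *ᵥ y = U *ᵥ (diagonal w *ᵥ (Uᴴ *ᵥ y)) := by
    rw [← mulVec_mulVec, ← mulVec_mulVec]
  rw [h1, dotProduct_mulVec]
  have h2 : star x ᵥ* U = star (Uᴴ *ᵥ x) := by
    rw [star_mulVec, conjTranspose_conjTranspose]
  rw [h2]
  simp [dotProduct, mulVec_diagonal]

private lemma conj_sq_aux (d : ℕ) (U : Matrix (Fin d) (Fin d) ℂ) (hU : Uᴴ * U = 1)
    (w : Fin d → ℂ) :
    (U * diagonal w * Uᴴ) ^ 2 = U * diagonal (fun i => w i * w i) * Uᴴ := by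
  calc (U * diagonal w * Uᴴ) ^ 2
      = U * (diagonal w * ((Uᴴ * U) * (diagonal w * Uᴴ))) := by
        rw [pow_two]; simp only [Matrix.mul_assoc]
    _ = U * diagonal (fun i => w i * w i) * Uᴴ := by
        rw [hU, one_mul, ← Matrix.mul_assoc (diagonal w), diagonal_mul_diagonal,
          ← Matrix.mul_assoc]


/-- Let `H` be a real antisymmetric `d×d` matrix, `ã` a real
symmetric positive semidefinite `d×d` matrix and `C > 0` such that `|H| ≤ C ã` in the
Loewner order, where `|H| = (−H²)^{1/2}` is the positive semidefinite square root of
`−H² = Hᵀ H` (given as any positive semidefinite `K` with `K² = −H²`; such a `K` is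
unique).  Then for all `u, v ∈ ℝ^d`,
`|uᵀ H v| ≤ C (uᵀ ã u)^{1/2} (vᵀ ã v)^{1/2}`. -/
theorem abs_skew_pairing_le_of_dominated
    (d : ℕ) (H K A : Matrix (Fin d) (Fin d) ℝ) (C : ℝ) (hC : 0 < C)
    (hH : Hᵀ = -H) (hA : A.PosSemidef) (hK : K.PosSemidef) (hK2 : K * K = -(H * H))
    (hle : (C • A - K).PosSemidef)
    (u v : Fin d → ℝ) :
    |u ⬝ᵥ H.mulVec v| ≤
      C * Real.sqrt (u ⬝ᵥ A.mulVec u) * Real.sqrt (v ⬝ᵥ A.mulVec v) := by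
  classical
  set Hc : Matrix (Fin d) (Fin d) ℂ := H.map Complex.ofReal with hHc
  set Kc : Matrix (Fin d) (Fin d) ℂ := K.map Complex.ofReal with hKcdef
  set M : Matrix (Fin d) (Fin d) ℂ := Complex.I • Hc with hMdef
  have hM : M.IsHermitian := by
    unfold Matrix.IsHermitian
    ext i j
    simp only [hMdef, hHc, Matrix.conjTranspose_apply, Matrix.smul_apply, Matrix.map_apply,
      smul_eq_mul, star_mul', Complex.star_def, Complex.conj_I, Complex.conj_ofReal]
    have := congrFun (congrFun hH j) i
    simp only [Matrix.transpose_apply, Matrix.neg_apply] at this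
    rw [this]
    push_cast
    ring
  have hKc : Kc.PosSemidef := by
    obtain ⟨B, hB⟩ : ∃ B : Matrix (Fin d) (Fin d) ℝ, K = Bᵀ * B := by
      open scoped MatrixOrder Matrix.Norms.L2Operator in
      exact CStarAlgebra.nonneg_iff_eq_star_mul_self.mp hK.nonneg
    have : Kc = (B.map Complex.ofReal)ᴴ * (B.map Complex.ofReal) := by
      rw [hKcdef, hB]
      ext i j
      simp [Matrix.mul_apply, Matrix.conjTranspose_apply, Matrix.map_apply]
    rw [this]
    exact posSemidef_conjTranspose_mul_self _
  set U : Matrix (Fin d) (Fin d) ℂ := (hM.eigenvectorUnitary : Matrix (Fin d) (Fin d) ℂ)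
    with hUdef
  set lam : Fin d → ℝ := hM.eigenvalues with hlamdef
  have hUU : Uᴴ * U = 1 := by
    simpa [hUdef, star_eq_conjTranspose] using
      (Matrix.mem_unitaryGroup_iff').mp (hM.eigenvectorUnitary).2
  have hspec : M = U * diagonal (fun i => (lam i : ℂ)) * Uᴴ := by
    simpa [hUdef, hlamdef, star_eq_conjTranspose, Function.comp_def] using hM.spectral_theorem
  set Kabs : Matrix (Fin d) (Fin d) ℂ := U * diagonal (fun i => ((|lam i| : ℝ) : ℂ)) * Uᴴ
    with hKabsdef
  have hKabsPSD : Kabs.PosSemidef := by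
    have hdiag : (diagonal (fun i => ((|lam i| : ℝ) : ℂ))).PosSemidef := by
      refine Matrix.PosSemidef.diagonal ?_
      intro i
      simp only [Pi.zero_apply]
      exact Complex.zero_le_real.mpr (abs_nonneg _)
    have := hdiag.conjTranspose_mul_mul_same Uᴴ
    simpa [hKabsdef, conjTranspose_conjTranspose] using this
  have hsqM : M ^ 2 = U * diagonal (fun i => ((lam i : ℂ)) * (lam i : ℂ)) * Uᴴ := by
    rw [hspec]; exact conj_sq_aux d U hUU _
  have hKabssq : Kabs ^ 2 = M ^ 2 := by
    have hfun : (fun i => ((|lam i| : ℝ) : ℂ) * ((|lam i| : ℝ) : ℂ))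
        = fun i => ((lam i : ℂ)) * (lam i : ℂ) := by
      funext i
      rw [← Complex.ofReal_mul, ← Complex.ofReal_mul, abs_mul_abs_self]
    rw [hKabsdef, conj_sq_aux d U hUU, hfun, hsqM]
  have hKcsq : Kc ^ 2 = M ^ 2 := by
    have h1 : Kc ^ 2 = (K * K).map Complex.ofReal := by
      rw [hKcdef]; ext i j; simp [pow_two, Matrix.mul_apply, Matrix.map_apply]
    have h2 : M ^ 2 = (-(H * H)).map Complex.ofReal := by
      rw [hMdef, hHc]
      ext i j
      simp only [pow_two, Matrix.mul_apply, Matrix.smul_apply, Matrix.map_apply,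
        Matrix.neg_apply, smul_eq_mul]
      push_cast
      rw [← Finset.sum_neg_distrib]
      apply Finset.sum_congr rfl
      intro k _
      ring_nf
      rw [Complex.I_sq]
      ring
    rw [h1, h2, hK2]
  have hKeq : Kc = Kabs := by
    open scoped MatrixOrder Matrix.Norms.L2Operator in
    exact (CFC.sq_eq_sq_iff Kc Kabs hKc.nonneg hKabsPSD.nonneg).mp (by rw [hKcsq, hKabssq])
  set uc : Fin d → ℂ := fun i => (u i : ℂ) with hucdef
  set vc : Fin d → ℂ := fun i => (v i : ℂ) with hvcdef
  set a : Fin d → ℂ := Uᴴ *ᵥ uc with hadef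
  set b : Fin d → ℂ := Uᴴ *ᵥ vc with hbdef
  have pair1 : Complex.I * ((u ⬝ᵥ H.mulVec v : ℝ) : ℂ)
      = ∑ i, star (a i) * ((lam i : ℂ) * b i) := by
    have lhs : star uc ⬝ᵥ M *ᵥ vc = Complex.I * ((u ⬝ᵥ H.mulVec v : ℝ) : ℂ) := by
      simp only [hMdef, hHc, hucdef, hvcdef, dotProduct, Matrix.mulVec, Matrix.smul_apply,
        Matrix.map_apply, Pi.star_apply, Complex.star_def, Complex.conj_ofReal, smul_eq_mul]
      push_cast
      rw [Finset.mul_sum]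
      apply Finset.sum_congr rfl
      intro i _
      rw [Finset.mul_sum, Finset.mul_sum, Finset.mul_sum]
      apply Finset.sum_congr rfl
      intro j _
      ring
    rw [← lhs, hspec, hadef, hbdef]
    exact quad_form_aux d U _ uc vc
  have quadK : ∀ (x : Fin d → ℝ),
      ((x ⬝ᵥ K.mulVec x : ℝ) : ℂ)
        = ∑ i, star ((Uᴴ *ᵥ (fun j => (x j : ℂ))) i)
            * (((|lam i| : ℝ) : ℂ) * (Uᴴ *ᵥ (fun j => (x j : ℂ))) i) := by
    intro x
    have lhs : star (fun j => (x j : ℂ)) ⬝ᵥ Kc *ᵥ (fun j => (x j : ℂ))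
        = ((x ⬝ᵥ K.mulVec x : ℝ) : ℂ) := by
      simp only [hKcdef, dotProduct, Matrix.mulVec, Matrix.map_apply, Pi.star_apply,
        Complex.star_def, Complex.conj_ofReal]
      push_cast
      rfl
    rw [← lhs, hKeq, hKabsdef]
    exact quad_form_aux d U _ _ _
  have quadK' : ∀ (x : Fin d → ℝ),
      x ⬝ᵥ K.mulVec x
        = ∑ i, |lam i| * ‖(Uᴴ *ᵥ (fun j => (x j : ℂ))) i‖ ^ 2 := by
    intro x
    rw [← Complex.ofReal_inj]
    rw [quadK x]
    push_cast
    apply Finset.sum_congr rfl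
    intro i _
    set z : ℂ := (Uᴴ *ᵥ (fun j => (x j : ℂ))) i with hz
    rw [← Complex.ofReal_pow, Complex.sq_norm, Complex.normSq_eq_conj_mul_self]
    simp only [Complex.star_def]
    ring
  have absHv : |u ⬝ᵥ H.mulVec v|
      ≤ Real.sqrt (u ⬝ᵥ K.mulVec u) * Real.sqrt (v ⬝ᵥ K.mulVec v) := by
    have h0 : |u ⬝ᵥ H.mulVec v|
        = ‖∑ i, star (a i) * ((lam i : ℂ) * b i)‖ := by
      rw [← pair1, norm_mul, Complex.norm_I, one_mul, Complex.norm_real, Real.norm_eq_abs]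
    rw [h0, quadK' u, quadK' v]
    calc ‖∑ i, star (a i) * ((lam i : ℂ) * b i)‖
        ≤ ∑ i, ‖star (a i) * ((lam i : ℂ) * b i)‖ :=
          norm_sum_le _ _
      _ = ∑ i, Real.sqrt (|lam i| * ‖a i‖ ^ 2)
            * Real.sqrt (|lam i| * ‖b i‖ ^ 2) := by
          apply Finset.sum_congr rfl
          intro i _
          have hstar : ‖star (a i)‖ = ‖a i‖ := by
            rw [Complex.star_def, Complex.norm_conj]
          rw [norm_mul, norm_mul, Complex.norm_real, Real.norm_eq_abs, hstar,
            Real.sqrt_mul (abs_nonneg _), Real.sqrt_mul (abs_nonneg _),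
            Real.sqrt_sq (norm_nonneg _), Real.sqrt_sq (norm_nonneg _)]
          conv_lhs => rw [← Real.mul_self_sqrt (abs_nonneg (lam i))]
          ring
      _ ≤ Real.sqrt (∑ i, |lam i| * ‖a i‖ ^ 2)
            * Real.sqrt (∑ i, |lam i| * ‖b i‖ ^ 2) := by
          apply Real.sum_sqrt_mul_sqrt_le
          · intro i; positivity
          · intro i; positivity
  have bound : ∀ (x : Fin d → ℝ), x ⬝ᵥ K.mulVec x ≤ C * (x ⬝ᵥ A.mulVec x) := by
    intro x
    have := hle.dotProduct_mulVec_nonneg x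
    simp only [star_trivial, Matrix.sub_mulVec, Matrix.smul_mulVec,
      dotProduct_sub, dotProduct_smul, smul_eq_mul] at this
    linarith
  have hKu : Real.sqrt (u ⬝ᵥ K.mulVec u) ≤ Real.sqrt C * Real.sqrt (u ⬝ᵥ A.mulVec u) := by
    rw [← Real.sqrt_mul hC.le]
    exact Real.sqrt_le_sqrt (bound u)
  have hKv : Real.sqrt (v ⬝ᵥ K.mulVec v) ≤ Real.sqrt C * Real.sqrt (v ⬝ᵥ A.mulVec v) := by
    rw [← Real.sqrt_mul hC.le]
    exact Real.sqrt_le_sqrt (bound v)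
  calc |u ⬝ᵥ H.mulVec v|
      ≤ Real.sqrt (u ⬝ᵥ K.mulVec u) * Real.sqrt (v ⬝ᵥ K.mulVec v) := absHv
    _ ≤ (Real.sqrt C * Real.sqrt (u ⬝ᵥ A.mulVec u))
        * (Real.sqrt C * Real.sqrt (v ⬝ᵥ A.mulVec v)) := by
        apply mul_le_mul hKu hKv (Real.sqrt_nonneg _)
        positivity
    _ = C * Real.sqrt (u ⬝ᵥ A.mulVec u) * Real.sqrt (v ⬝ᵥ A.mulVec v) := by
        rw [mul_mul_mul_comm, Real.mul_self_sqrt hC.le, mul_assoc]
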